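/- For an image-finite LTS, the apartness relation is the complement of strong bisimilarity: x # y if and only if x and y are not strongly bisimilar. -/

import Mathlib

/-- A symmetric relation `R` is a strong bisimulation on the LTS `(X, A, tr)`. -/
def IsBisimulation {X A : Type} (tr : X → A → X → Prop) (R : X → X → Prop) : Prop :=
  Symmetric R ∧ ∀ x y, R x y → ∀ a x', tr x a x' → ∃ y', tr y a y' ∧ R x' y'

/-- Strong bisimilarity: the union of all strong bisimulations. -/
def Bisimilar {X A : Type} (tr : X → A → X → Prop) (x y : X) : Prop :=
  ∃ R, IsBisimulation tr R ∧ R x y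

/-- A symmetric relation `R` is an apartness relation on the LTS `(X, A, tr)`. -/
def IsApartnessRel {X A : Type} (tr : X → A → X → Prop) (R : X → X → Prop) : Prop :=
  Symmetric R ∧ ∀ x y a x', tr x a x' → (∀ y', tr y a y' → R x' y') → R x y

/-- Apartness: the intersection of all apartness relations. -/
def Apart {X A : Type} (tr : X → A → X → Prop) (x y : X) : Prop :=
  ∀ R, IsApartnessRel tr R → R x y

/-- An LTS is image-finite if every state has finitely many `a`-successors, for each `a`. -/
def ImageFinite {X A : Type} (tr : X → A → X → Prop) : Prop :=
  ∀ x a, {x' | tr x a x'}.Finite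

theorem apart_iff_not_bisimilar {X A : Type} (tr : X → A → X → Prop)
    (h : ImageFinite tr) (x y : X) :
    Apart tr x y ↔ ¬ Bisimilar tr x y := by
  constructor
  · -- Apart → ¬Bisimilar: the complement of bisimilarity is an apartness relation.
    intro hap hbis
    have hA : IsApartnessRel tr (fun u v => ¬ Bisimilar tr u v) := by
      constructor
      · intro u v huv ⟨R, hR, hRvu⟩
        exact huv ⟨R, hR, hR.1 hRvu⟩
      · intro u v a u' htr hall ⟨R, hR, hRuv⟩
        obtain ⟨v', htrv, hRv⟩ := hR.2 u v hRuv a u' htr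
        exact hall v' htrv ⟨R, hR, hRv⟩
    exact hap _ hA hbis
  · -- ¬Bisimilar → Apart: the complement of Apart is a bisimulation.
    intro hnb
    by_contra hna
    apply hnb
    refine ⟨fun u v => ¬ Apart tr u v, ⟨?_, ?_⟩, hna⟩
    · intro u v huv hvu
      exact huv (fun R hR => hR.1 (hvu R hR))
    · intro u v huv a u' htr
      by_contra hall
      push_neg at hall
      apply huv
      intro R hR
      exact hR.2 u v a u' htr (fun v' htrv => (hall v' htrv) R hR)
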